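/- Let H_w be a class of functions w : Z → ℝ^k that is closed under finite sums and scalar multiplication (i.e., forms a vector space under pointwise operations). Fix a finite set E of environments, each with a risk functional R^e defined on predictors. A tuple (Φ, (w^q)_{q∈E}) is a Nash equilibrium of the ensemble game if for every e ∈ E and every w̄ ∈ H_w, R^e((1/|E|)(w^e + Σ_{q≠e} w^q) ∘ Φ) ≤ R^e((1/|E|)(w̄ + Σ_{q≠e} w^q) ∘ Φ). A pair (Φ, w) with w ∈ H_w is an invariant predictor if for every e ∈ E and every w̄ ∈ H_w, R^e(w ∘ Φ) ≤ R^e(w̄ ∘ Φ). Then: (Φ, (w^q)_{q∈E}) is a Nash equilibrium of the ensemble game if and only if (Φ, w^av) with w^av = (1/|E|) Σ_{q∈E} w^q is an invariant predictor. -/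

import Mathlib

/-- NE of the ensemble game ↔ invariant predictor (Theorem 1 / Corollary 1 core). -/
theorem ne_iff_invariant
    {X Z E : Type*} [Fintype E] [Nonempty E] [DecidableEq E] {k : ℕ}
    (Hw : Set (Z → (Fin k → ℝ)))
    (hadd : ∀ w1 ∈ Hw, ∀ w2 ∈ Hw, w1 + w2 ∈ Hw)
    (hsmul : ∀ (c : ℝ), ∀ w ∈ Hw, c • w ∈ Hw)
    (R : E → (X → (Fin k → ℝ)) → ℝ)
    (Φ : X → Z)
    (w : E → (Z → (Fin k → ℝ)))
    (hw : ∀ e, w e ∈ Hw) :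
    (∀ e : E, ∀ wb ∈ Hw,
        R e (fun x => ((Fintype.card E : ℝ)⁻¹) •
          (w e (Φ x) + ∑ q ∈ Finset.univ.erase e, w q (Φ x)))
        ≤ R e (fun x => ((Fintype.card E : ℝ)⁻¹) •
          (wb (Φ x) + ∑ q ∈ Finset.univ.erase e, w q (Φ x))))
    ↔
    (∀ e : E, ∀ wb ∈ Hw,
        R e (fun x => ((Fintype.card E : ℝ)⁻¹) • (∑ q : E, w q (Φ x)))
        ≤ R e (fun x => wb (Φ x))) := by
  set n : ℝ := (Fintype.card E : ℝ) with hn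
  have hnpos : (0 : ℝ) < n := by
    simp [hn, Fintype.card_pos]
  have hnne : n ≠ 0 := ne_of_gt hnpos
  have h0 : (0 : Z → Fin k → ℝ) ∈ Hw := by
    have := hsmul 0 (w (Classical.arbitrary E)) (hw _)
    simpa using this
  have hsum : ∀ s : Finset E, (∑ q ∈ s, w q) ∈ Hw := by
    intro s
    induction s using Finset.induction_on with
    | empty => simpa using h0
    | insert _ _ hx ih =>
        rw [Finset.sum_insert hx]
        exact hadd _ (hw _) _ ih
  constructor
  · intro hNE e wb hwb
    set S : Z → Fin k → ℝ := ∑ q ∈ Finset.univ.erase e, w q with hS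
    have hSmem : S ∈ Hw := hsum _
    set w' : Z → Fin k → ℝ := n • wb + (-1 : ℝ) • S with hw'
    have hw'mem : w' ∈ Hw := hadd _ (hsmul n wb hwb) _ (hsmul (-1) S hSmem)
    have := hNE e w' hw'mem
    have hL : (fun x => n⁻¹ • (w e (Φ x) + ∑ q ∈ Finset.univ.erase e, w q (Φ x)))
        = (fun x => n⁻¹ • (∑ q : E, w q (Φ x))) := by
      funext x
      rw [← Finset.add_sum_erase Finset.univ (fun q => w q (Φ x)) (Finset.mem_univ e)]
    have hR : (fun x => n⁻¹ • (w' (Φ x) + ∑ q ∈ Finset.univ.erase e, w q (Φ x)))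
        = (fun x => wb (Φ x)) := by
      funext x
      have hSx : S (Φ x) = ∑ q ∈ Finset.univ.erase e, w q (Φ x) := by
        simp [hS, Finset.sum_apply]
      simp only [hw', Pi.add_apply, Pi.smul_apply, hSx]
      rw [neg_one_smul, neg_add_cancel_right, smul_smul, inv_mul_cancel₀ hnne, one_smul]
    rw [hL, hR] at this
    exact this
  · intro hInv e wb hwb
    set S : Z → Fin k → ℝ := ∑ q ∈ Finset.univ.erase e, w q with hS
    have hSmem : S ∈ Hw := hsum _
    set w' : Z → Fin k → ℝ := n⁻¹ • (wb + S) with hw'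
    have hw'mem : w' ∈ Hw := hsmul _ _ (hadd _ hwb _ hSmem)
    have := hInv e w' hw'mem
    have hSx : ∀ x, S (Φ x) = ∑ q ∈ Finset.univ.erase e, w q (Φ x) := by
      intro x; simp [hS, Finset.sum_apply]
    have hL : (fun x => n⁻¹ • (∑ q : E, w q (Φ x)))
        = (fun x => n⁻¹ • (w e (Φ x) + ∑ q ∈ Finset.univ.erase e, w q (Φ x))) := by
      funext x
      rw [← Finset.add_sum_erase Finset.univ (fun q => w q (Φ x)) (Finset.mem_univ e)]
    have hR : (fun x => w' (Φ x))
        = (fun x => n⁻¹ • (wb (Φ x) + ∑ q ∈ Finset.univ.erase e, w q (Φ x))) := by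
      funext x
      simp [hw', hSx x]
    rw [hL, hR] at this
    exact this
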